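/- Exact law of the number of equalizations (Feller): let n ≥ 2 be an even integer and 0 ≤ k ≤ n/2 an integer. Then the number of sequences y ∈ {0,1}^n whose lead-change count satisfies c(y_1,…,y_n) = k + 1 equals 2^k · binom(n−k, n/2). Equivalently, for uniformly random bits, p_{n,k} := P[c(ε_1,…,ε_n) = k+1] = 2^{−(n−k)} · binom(n−k, n/2). -/

import Mathlib

/-- `extSeq n y` is the `{0,1}`-valued sequence on `ℕ` (indexed `1, …, n`)
corresponding to the bit vector `y : Fin n → Bool` (and `0` outside `[1, n]`). -/
def extSeq (n : ℕ) (y : Fin n → Bool) : ℕ → ℕ :=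
  fun i => if h : 1 ≤ i ∧ i ≤ n then (if y ⟨i - 1, by omega⟩ then 1 else 0) else 0

/-- `leadCount t Y` is the lead-change count of the prefix `(Y 1, …, Y t)`:
the number of `0 ≤ j ≤ t` with `∑_{i=1}^j Y i = ∑_{i=1}^j (1 - Y i)`,
i.e. `2 ∑_{i=1}^j Y i = j` (note `j = 0` always counts). -/
def leadCount (t : ℕ) (Y : ℕ → ℕ) : ℕ :=
  ((Finset.range (t + 1)).filter (fun j => 2 * ∑ i ∈ Finset.Icc 1 j, Y i = j)).card

namespace FellerAux

/-! ### The combinatorial kernel: a recursively defined path-count `g` -/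

/-- `g L b` counts walks of length `L` with ±1 steps, from `b` down-to... formally just
the recursion we need. -/
def g : ℕ → ℕ → ℕ
  | 0, 0 => 1
  | 0, _+1 => 0
  | _+1, 0 => 0
  | L+1, b+1 => g L b + g L (b+2)

lemma g_succ_succ (L b : ℕ) : g (L+1) (b+1) = g L b + g L (b+2) := rfl

lemma g_succ_zero (L : ℕ) : g (L+1) 0 = 0 := rfl

lemma g_zero_succ (b : ℕ) : g 0 (b+1) = 0 := rfl

lemma g_big : ∀ {L b : ℕ}, L < b → g L b = 0
  | 0, _+1, _ => rfl
  | L+1, b+1, h => by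
      rw [g_succ_succ, g_big (by omega : L < b), g_big (by omega : L < b+2)]

lemma g_one (b : ℕ) : g 1 b = if b = 1 then 1 else 0 := by
  match b with
  | 0 => rfl
  | 1 => rfl
  | b+2 =>
      rw [g_succ_succ]
      rw [g_zero_succ, g_big (by omega : (0:ℕ) < b+3)]
      simp

/-! ### Sums of `g` along a row -/

lemma sum_peel (L b R : ℕ) :
    ∑ i ∈ Finset.range (R+1), g L (b+i)
      = g L b + ∑ i ∈ Finset.range R, g L (b+1+i) := by
  rw [Finset.sum_range_succ']
  have h1 : ∑ i ∈ Finset.range R, g L (b+(i+1)) = ∑ i ∈ Finset.range R, g L (b+1+i) := by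
    apply Finset.sum_congr rfl
    intro i _
    congr 1
    omega
  have h2 : b + 0 = b := rfl
  rw [h1, h2, add_comm]

lemma sum_g_ext_aux (L b R : ℕ) (h1 : L < b + R) : ∀ (d : ℕ),
    ∑ i ∈ Finset.range (R+d), g L (b+i) = ∑ i ∈ Finset.range R, g L (b+i)
  | 0 => rfl
  | d+1 => by
      have h : R + (d+1) = (R+d)+1 := rfl
      rw [h, Finset.sum_range_succ, g_big (by omega : L < b+(R+d)),
        sum_g_ext_aux L b R h1 d]
      simp

lemma sum_g_ext (L b : ℕ) {R R' : ℕ} (h1 : L < b + R) (h2 : R ≤ R') :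
    ∑ i ∈ Finset.range R', g L (b+i) = ∑ i ∈ Finset.range R, g L (b+i) := by
  obtain ⟨d, rfl⟩ : ∃ d, R' = R + d := ⟨R'-R, by omega⟩
  exact sum_g_ext_aux L b R h1 d

lemma double_pascal (M : ℕ) :
    2 * (Nat.choose M ((M+1)/2) + Nat.choose M ((M+2)/2))
      = Nat.choose (M+1) ((M+1)/2) + Nat.choose (M+1) ((M+2)/2) := by
  rcases Nat.even_or_odd M with ⟨e, he⟩ | ⟨e, he⟩
  · subst he
    have h1 : (e+e+1)/2 = e := by omega
    have h2 : (e+e+2)/2 = e+1 := by omega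
    rw [h1, h2]
    rcases Nat.eq_zero_or_pos e with rfl | he0
    · decide
    · have hsym : Nat.choose (e+e) (e+1) = Nat.choose (e+e) (e-1) := by
        rw [← Nat.choose_symm (by omega : e+1 ≤ e+e)]
        congr 1
        omega
      have p1 : Nat.choose (e+e+1) e = Nat.choose (e+e) (e-1) + Nat.choose (e+e) e := by
        obtain ⟨e', rfl⟩ : ∃ e', e = e'+1 := ⟨e-1, by omega⟩
        have : e'+1+(e'+1) = (e'+e'+1)+1 := by omega
        rw [this, Nat.choose_succ_succ]
        congr 2 <;> omega
      have p2 : Nat.choose (e+e+1) (e+1) = Nat.choose (e+e) e + Nat.choose (e+e) (e+1) :=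
        Nat.choose_succ_succ _ _
      rw [p1, p2, hsym]
      ring
  · subst he
    have h1 : (2*e+1+1)/2 = e+1 := by omega
    have h2 : (2*e+1+2)/2 = e+1 := by omega
    rw [h1, h2]
    have p2 : Nat.choose (2*e+1+1) (e+1) = Nat.choose (2*e+1) e + Nat.choose (2*e+1) (e+1) := by
      have : 2*e+1+1 = (2*e+1)+1 := rfl
      rw [this, Nat.choose_succ_succ]
    have hsym : Nat.choose (2*e+1) e = Nat.choose (2*e+1) (e+1) := by
      rw [← Nat.choose_symm (by omega : e+1 ≤ 2*e+1)]
      congr 1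
      omega
    rw [p2, hsym]
    ring

/-- The fundamental closed form for row sums of `g`. -/
lemma S_closed : ∀ (M b R : ℕ), M + 1 ≤ R →
    g (M+1) b + 2 * ∑ i ∈ Finset.range R, g (M+1) (b+1+i)
      = Nat.choose M ((M+b)/2) + Nat.choose M ((M+1+b)/2) := by
  intro M
  induction M with
  | zero =>
      intro b R hR
      obtain ⟨R₀, rfl⟩ : ∃ R₀, R = R₀+1 := ⟨R-1, by omega⟩
      match b with
      | 0 =>
          rw [g_succ_zero]
          rw [Finset.sum_range_succ']
          have hz : ∀ i ∈ Finset.range R₀, g 1 (0+1+(i+1)) = 0 := by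
            intro i _
            rw [g_one, if_neg (by omega)]
          rw [Finset.sum_congr rfl hz]
          norm_num [g_one]
      | 1 =>
          have hz : ∀ i ∈ Finset.range (R₀+1), g 1 (1+1+i) = 0 := by
            intro i _
            rw [g_one, if_neg (by omega)]
          rw [Finset.sum_congr rfl hz]
          norm_num [g_one]
      | (c+2) =>
          have hz : ∀ i ∈ Finset.range (R₀+1), g 1 (c+2+1+i) = 0 := by
            intro i _
            rw [g_one, if_neg (by omega)]
          rw [Finset.sum_congr rfl hz]
          rw [g_big (by omega : 1 < c+2)]
          have c1 : Nat.choose 0 ((0+(c+2))/2) = 0 := Nat.choose_eq_zero_of_lt (by omega)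
          have c2 : Nat.choose 0 ((0+1+(c+2))/2) = 0 := Nat.choose_eq_zero_of_lt (by omega)
          rw [c1, c2]
          simp
  | succ M ih =>
      intro b R hR
      match b with
      | 0 =>
          obtain ⟨R₁, rfl⟩ : ∃ R₁, R = R₁+2 := ⟨R-2, by omega⟩
          have hsplit : ∀ i ∈ Finset.range (R₁+2),
              g (M+1+1) (0+1+i) = g (M+1) (0+i) + g (M+1) (2+i) := by
            intro i _
            rw [show 0+1+i = (0+i)+1 from by omega, g_succ_succ]
            congr 2
            omega
          rw [Finset.sum_congr rfl hsplit, Finset.sum_add_distrib]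
          have hA : ∑ i ∈ Finset.range (R₁+2), g (M+1) (0+i)
              = g (M+1) 1 + ∑ i ∈ Finset.range R₁, g (M+1) (2+i) := by
            rw [show R₁+2 = (R₁+1)+1 from rfl, sum_peel (M+1) 0 (R₁+1)]
            rw [sum_peel (M+1) 1 R₁, g_succ_zero]
            rw [Finset.sum_congr rfl
              (fun i _ => by rw [show 1+1+i = 2+i from by omega] :
                ∀ i ∈ Finset.range R₁, g (M+1) (1+1+i) = g (M+1) (2+i))]
            omega
          have hB : ∑ i ∈ Finset.range (R₁+2), g (M+1) (2+i)
              = ∑ i ∈ Finset.range R₁, g (M+1) (2+i) := by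
            exact sum_g_ext (M+1) 2 (by omega) (by omega)
          rw [hA, hB, g_succ_zero]
          have hIH := ih 1 (R₁+1) (by omega)
          rw [Finset.sum_congr rfl
            (fun i _ => by rw [show 1+1+i = 2+i from by omega] :
              ∀ i ∈ Finset.range (R₁+1), g (M+1) (1+1+i) = g (M+1) (2+i))] at hIH
          rw [sum_g_ext (M+1) 2 (by omega : M+1 < 2+R₁) (by omega : R₁ ≤ R₁+1)] at hIH
          rw [show (M+1+0)/2 = (M+1)/2 from by omega,
            show (M+1+1+0)/2 = (M+2)/2 from by omega, ← double_pascal M]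
          rw [show (M+1+1)/2 = (M+2)/2 from by omega] at hIH
          rw [← hIH]
          ring
      | (c+1) =>
          have hsplit : ∀ i ∈ Finset.range R,
              g (M+1+1) (c+1+1+i) = g (M+1) (c+1+i) + g (M+1) (c+2+1+i) := by
            intro i _
            have e1 : c+1+1+i = (c+1+i)+1 := by omega
            rw [e1, g_succ_succ]
            congr 2
            omega
          rw [Finset.sum_congr rfl hsplit, Finset.sum_add_distrib]
          rw [g_succ_succ]
          have h1 := ih c R (by omega)
          have h2 := ih (c+2) R (by omega)
          have goal : Nat.choose (M+1) ((M+1+(c+1))/2) + Nat.choose (M+1) ((M+1+1+(c+1))/2)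
              = (Nat.choose M ((M+c)/2) + Nat.choose M ((M+1+c)/2))
                + (Nat.choose M ((M+(c+2))/2) + Nat.choose M ((M+1+(c+2))/2)) := by
            have e1 : (M+1+(c+1))/2 = (M+c)/2 + 1 := by omega
            have e2 : (M+1+1+(c+1))/2 = (M+1+c)/2 + 1 := by omega
            have e3 : (M+(c+2))/2 = (M+c)/2 + 1 := by omega
            have e4 : (M+1+(c+2))/2 = (M+1+c)/2 + 1 := by omega
            rw [e1, e2, e3, e4]
            simp only [Nat.choose_succ_succ]
            ring
          rw [goal, ← h1, ← h2]
          ring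

/-! ### Paths as bit lists -/

def step (b : Bool) : ℤ := if b then 1 else -1
lemma step_true : step true = 1 := rfl
lemma step_false : step false = -1 := rfl

def wsum : List Bool → ℤ
  | [] => 0
  | b :: l => step b + wsum l

def zc : List Bool → ℕ
  | [] => 0
  | b :: l => zc l + (if step b + wsum l = 0 then 1 else 0)

lemma wsum_cons (b l) : wsum (b :: l) = step b + wsum l := rfl
lemma zc_cons (b l) : zc (b :: l) = zc l + (if step b + wsum l = 0 then 1 else 0) := rfl

lemma wsum_map_not : ∀ l : List Bool, wsum (l.map (fun b => !b)) = - wsum l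
  | [] => by simp [wsum]
  | b :: l => by
      rw [List.map_cons, wsum_cons, wsum_cons, wsum_map_not l]
      cases b <;> simp [step] <;> ring

lemma zc_map_not : ∀ l : List Bool, zc (l.map (fun b => !b)) = zc l
  | [] => rfl
  | b :: l => by
      rw [List.map_cons, zc_cons, zc_cons, zc_map_not l, wsum_map_not l]
      congr 1
      have h : step (!b) + -wsum l = -(step b + wsum l) := by
        cases b <;> simp [step] <;> ring
      rw [h]
      have h2 : -(step b + wsum l) = 0 ↔ step b + wsum l = 0 := neg_eq_zero
      simp only [h2]

lemma wsum_eq (l : List Bool) : wsum l = 2 * (l.count true : ℤ) - l.length := by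
  induction l with
  | nil => simp [wsum]
  | cons b l ih =>
      rw [wsum_cons, ih]
      cases b <;> simp [step, List.count_cons] <;> ring

lemma wsum_bound (l : List Bool) : (wsum l).natAbs ≤ l.length := by
  have h1 : l.count true ≤ l.length := List.count_le_length
  rw [wsum_eq]
  omega

def path {t : ℕ} (y : Fin t → Bool) : List Bool := (List.ofFn y).reverse

lemma path_length {t : ℕ} (y : Fin t → Bool) : (path y).length = t := by simp [path]

lemma path_snoc {t : ℕ} (y : Fin t → Bool) (b : Bool) :
    path (Fin.snoc y b) = b :: path y := by
  unfold path
  rw [List.ofFn_succ']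
  have h1 : (fun i : Fin t => (Fin.snoc y b : Fin (t+1) → Bool) i.castSucc) = y := by
    funext i; simp
  have h2 : (Fin.snoc y b : Fin (t+1) → Bool) (Fin.last t) = b := by simp
  rw [h1, h2, List.concat_eq_append, List.reverse_append]
  rfl

lemma path_not {t : ℕ} (y : Fin t → Bool) :
    path (fun i => !(y i)) = (path y).map (fun b => !b) := by
  unfold path
  have h : (List.ofFn fun i => !y i) = List.map (fun b => !b) (List.ofFn y) := by
    rw [List.map_ofFn]; rfl
  rw [h]
  simp

/-! ### The refined count `cnt` -/

def cnt (t k : ℕ) (s : ℤ) : ℕ :=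
  (Finset.univ.filter (fun y : Fin t → Bool => zc (path y) = k ∧ wsum (path y) = s)).card

lemma cnt_zero (k : ℕ) (s : ℤ) : cnt 0 k s = if k = 0 ∧ s = 0 then 1 else 0 := by
  have hp : ∀ y : Fin 0 → Bool, path y = [] := by
    intro y
    exact List.eq_nil_of_length_eq_zero (path_length y)
  rw [cnt, Finset.card_filter, Fintype.sum_unique]
  simp only [hp]
  show (if zc [] = k ∧ wsum [] = s then 1 else 0) = _
  have h1 : zc [] = 0 := rfl
  have h2 : wsum [] = 0 := rfl
  rw [h1, h2]
  simp [eq_comm]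

lemma cnt_neg (t k : ℕ) (s : ℤ) : cnt t k (-s) = cnt t k s := by
  rw [cnt, cnt]
  apply Finset.card_bij' (fun (y : Fin t → Bool) _ => fun i => !(y i))
    (fun (y : Fin t → Bool) _ => fun i => !(y i))
  · intro y hy
    simp only [Finset.mem_filter, Finset.mem_univ, true_and] at hy ⊢
    rw [path_not, zc_map_not, wsum_map_not]
    exact ⟨hy.1, by rw [hy.2]; ring⟩
  · intro y hy
    simp only [Finset.mem_filter, Finset.mem_univ, true_and] at hy ⊢
    rw [path_not, zc_map_not, wsum_map_not]
    exact ⟨hy.1, by rw [hy.2]⟩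
  · intro y _; funext i; simp
  · intro y _; funext i; simp

lemma cnt_succ (t k : ℕ) (s : ℤ) :
    cnt (t+1) k s
      = ∑ y : Fin t → Bool,
        ((if zc (path y) + (if 1 + wsum (path y) = 0 then 1 else 0) = k
              ∧ 1 + wsum (path y) = s then 1 else 0)
          + (if zc (path y) + (if -1 + wsum (path y) = 0 then 1 else 0) = k
              ∧ -1 + wsum (path y) = s then 1 else 0)) := by
  rw [cnt, Finset.card_filter]
  rw [← Equiv.sum_comp (Fin.snocEquiv (fun _ => Bool))
    (fun y : Fin (t+1) → Bool => if zc (path y) = k ∧ wsum (path y) = s then (1:ℕ) else 0)]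
  rw [Fintype.sum_prod_type]
  rw [Fintype.sum_bool]
  rw [← Finset.sum_add_distrib]
  apply Finset.sum_congr rfl
  intro y _
  have e1 : (Fin.snocEquiv (fun _ => Bool)) (true, y) = Fin.snoc y true := rfl
  have e2 : (Fin.snocEquiv (fun _ => Bool)) (false, y) = Fin.snoc y false := rfl
  rw [e1, e2, path_snoc, path_snoc, zc_cons, zc_cons, wsum_cons, wsum_cons,
    step_true, step_false]

lemma cnt_succ_ne (t k : ℕ) (s : ℤ) (hs : s ≠ 0) :
    cnt (t+1) k s = cnt t k (s-1) + cnt t k (s+1) := by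
  rw [cnt_succ]
  rw [cnt, cnt, Finset.card_filter, Finset.card_filter, ← Finset.sum_add_distrib]
  apply Finset.sum_congr rfl
  intro y _
  set w := wsum (path y) with hw
  set z := zc (path y) with hz
  congr 1
  · apply if_congr ?_ rfl rfl
    by_cases h : (1:ℤ) + w = 0
    · rw [if_pos h]
      constructor <;> rintro ⟨h1, h2⟩ <;> exact ⟨by omega, by omega⟩
    · rw [if_neg h]
      constructor <;> rintro ⟨h1, h2⟩ <;> exact ⟨by omega, by omega⟩
  · apply if_congr ?_ rfl rfl
    by_cases h : (-1:ℤ) + w = 0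
    · rw [if_pos h]
      constructor <;> rintro ⟨h1, h2⟩ <;> exact ⟨by omega, by omega⟩
    · rw [if_neg h]
      constructor <;> rintro ⟨h1, h2⟩ <;> exact ⟨by omega, by omega⟩

lemma cnt_succ_zero (t k : ℕ) :
    cnt (t+1) (k+1) 0 = cnt t k (-1) + cnt t k 1 := by
  rw [cnt_succ]
  rw [cnt, cnt, Finset.card_filter, Finset.card_filter, ← Finset.sum_add_distrib]
  apply Finset.sum_congr rfl
  intro y _
  set w := wsum (path y) with hw
  set z := zc (path y) with hz
  congr 1
  · apply if_congr ?_ rfl rfl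
    by_cases h : (1:ℤ) + w = 0
    · rw [if_pos h]
      constructor <;> rintro ⟨h1, h2⟩ <;> exact ⟨by omega, by omega⟩
    · rw [if_neg h]
      constructor <;> rintro ⟨h1, h2⟩ <;> exact ⟨by omega, by omega⟩
  · apply if_congr ?_ rfl rfl
    by_cases h : (-1:ℤ) + w = 0
    · rw [if_pos h]
      constructor <;> rintro ⟨h1, h2⟩ <;> exact ⟨by omega, by omega⟩
    · rw [if_neg h]
      constructor <;> rintro ⟨h1, h2⟩ <;> exact ⟨by omega, by omega⟩

lemma cnt_succ_zero_zero (t : ℕ) : cnt (t+1) 0 0 = 0 := by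
  rw [cnt_succ]
  apply Finset.sum_eq_zero
  intro y _
  set w := wsum (path y) with hw
  set z := zc (path y) with hz
  have c1 : ¬(z + (if (1:ℤ) + w = 0 then 1 else 0) = 0 ∧ (1:ℤ) + w = 0) := by
    rintro ⟨h1, h2⟩
    rw [if_pos h2] at h1
    omega
  have c2 : ¬(z + (if (-1:ℤ) + w = 0 then 1 else 0) = 0 ∧ (-1:ℤ) + w = 0) := by
    rintro ⟨h1, h2⟩
    rw [if_pos h2] at h1
    omega
  rw [if_neg c1, if_neg c2]
  rfl

/-! ### The master formula for `cnt` -/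

lemma cnt_eq : ∀ (t k : ℕ) (s : ℤ), cnt t k s = 2^k * g (t - k) (s.natAbs + k) := by
  intro t
  induction t with
  | zero =>
      intro k s
      rw [cnt_zero]
      match k with
      | 0 =>
          by_cases hs : s = 0
          · subst hs
            simp [g]
          · rw [if_neg (by simp [hs])]
            obtain ⟨m, hm⟩ : ∃ m, s.natAbs = m+1 :=
              ⟨s.natAbs - 1, by have := Int.natAbs_ne_zero.mpr hs; omega⟩
            rw [hm]
            show 0 = 2^0 * g 0 (m+1+0)
            rw [g_zero_succ]
            simp
      | k+1 =>
          rw [if_neg (by simp)]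
          rw [show (0:ℕ) - (k+1) = 0 from by omega]
          show 0 = 2^(k+1) * g 0 (s.natAbs + (k+1))
          rw [show s.natAbs + (k+1) = (s.natAbs + k) + 1 from rfl, g_zero_succ]
          simp
  | succ t ih =>
      intro k s
      rcases eq_or_ne s 0 with rfl | hs
      · match k with
        | 0 =>
            rw [cnt_succ_zero_zero]
            show 0 = 2^0 * g (t+1) ((0:ℤ).natAbs + 0)
            rw [show (0:ℤ).natAbs + 0 = 0 from rfl, g_succ_zero]
            simp
        | k+1 =>
            rw [cnt_succ_zero, show ((-1 : ℤ)) = -(1:ℤ) from rfl, cnt_neg, ih k 1]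
            rw [show t + 1 - (k+1) = t - k from by omega]
            rw [show ((0:ℤ).natAbs + (k+1)) = (1:ℤ).natAbs + k from by simp; omega]
            rw [pow_succ]
            ring
      · have main : ∀ s : ℤ, 0 < s → cnt (t+1) k s = 2^k * g (t+1-k) (s.natAbs + k) := by
          intro s hpos
          rw [cnt_succ_ne t k s (by omega), ih k (s-1), ih k (s+1)]
          obtain ⟨u, hu⟩ : ∃ u : ℕ, s = (u:ℤ) + 1 := ⟨(s-1).toNat, by omega⟩
          subst hu
          have e1 : ((u:ℤ) + 1 - 1).natAbs = u := by
            rw [show (u:ℤ) + 1 - 1 = (u:ℤ) from by ring, Int.natAbs_natCast]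
          have e2 : ((u:ℤ) + 1 + 1).natAbs = u + 2 := by
            rw [show (u:ℤ) + 1 + 1 = ((u+2 : ℕ) : ℤ) from by push_cast; ring, Int.natAbs_natCast]
          have e3 : ((u:ℤ) + 1).natAbs = u + 1 := by
            rw [show (u:ℤ) + 1 = ((u+1 : ℕ) : ℤ) from by push_cast; ring, Int.natAbs_natCast]
          rw [e1, e2, e3]
          rcases le_or_gt k t with hk | hk
          · rw [show t+1-k = (t-k)+1 from by omega]
            rw [show u+1+k = (u+k)+1 from by omega, g_succ_succ]
            rw [show u+2+k = (u+k)+2 from by omega]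
            ring
          · rw [show t-k = 0 from by omega, show t+1-k = 0 from by omega]
            rw [show u+k = (u+k-1)+1 from by omega, g_zero_succ]
            rw [show u+2+k = (u+2+k-1)+1 from by omega, g_zero_succ]
            rw [show u+1+k = (u+1+k-1)+1 from by omega, g_zero_succ]
            simp
        rcases lt_or_gt_of_ne hs with hneg | hpos
        · have h1 := main (-s) (by omega)
          calc cnt (t+1) k s = cnt (t+1) k (-(-s)) := by rw [neg_neg]
            _ = cnt (t+1) k (-s) := cnt_neg _ _ _
            _ = 2^k * g (t+1-k) ((-s).natAbs + k) := h1
            _ = 2^k * g (t+1-k) (s.natAbs + k) := by rw [Int.natAbs_neg]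
        · exact main s hpos

/-! ### Relating `leadCount` to `zc` -/

lemma extSeq_snoc_agree (n : ℕ) (y : Fin n → Bool) (b : Bool) (i : ℕ)
    (h1 : 1 ≤ i) (h2 : i ≤ n) :
    extSeq (n+1) (Fin.snoc y b) i = extSeq n y i := by
  simp only [extSeq]
  rw [dif_pos ⟨h1, by omega⟩, dif_pos ⟨h1, h2⟩]
  have hv : (Fin.snoc y b : Fin (n+1) → Bool) ⟨i-1, by omega⟩ = y ⟨i-1, by omega⟩ := by
    have hlt : i - 1 < n := by omega
    simp [Fin.snoc, hlt]
  rw [hv]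

lemma sum_extSeq : ∀ (t : ℕ) (y : Fin t → Bool),
    ∑ i ∈ Finset.Icc 1 t, extSeq t y i = (path y).count true := by
  intro t
  induction t with
  | zero =>
      intro y
      have hp : path y = [] := List.eq_nil_of_length_eq_zero (path_length y)
      rw [hp, Finset.Icc_eq_empty (by omega), Finset.sum_empty]
      rfl
  | succ t ih =>
      intro y
      have hy : y = Fin.snoc (Fin.init y) (y (Fin.last t)) := (Fin.snoc_init_self y).symm
      rw [hy]
      set y₀ := Fin.init y with hy₀
      set b := y (Fin.last t) with hb
      rw [Finset.sum_Icc_succ_top (by omega : 1 ≤ t+1)]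
      have hagree : ∀ i ∈ Finset.Icc 1 t,
          extSeq (t+1) (Fin.snoc y₀ b) i = extSeq t y₀ i := by
        intro i hi
        rw [Finset.mem_Icc] at hi
        exact extSeq_snoc_agree t y₀ b i hi.1 hi.2
      rw [Finset.sum_congr rfl hagree, ih y₀, path_snoc]
      have hval : extSeq (t+1) (Fin.snoc y₀ b) (t+1) = if b then 1 else 0 := by
        simp only [extSeq]
        rw [dif_pos ⟨by omega, le_refl _⟩]
        have hlast : (⟨t+1-1, by omega⟩ : Fin (t+1)) = Fin.last t := by
          apply Fin.ext
          simp [Fin.last]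
        rw [hlast, Fin.snoc_last]
      rw [hval, List.count_cons]
      cases b <;> simp

lemma lead_eq : ∀ (n : ℕ) (y : Fin n → Bool),
    leadCount n (extSeq n y) = zc (path y) + 1 := by
  intro n
  induction n with
  | zero =>
      intro y
      have hp : path y = [] := List.eq_nil_of_length_eq_zero (path_length y)
      rw [leadCount, hp]
      rw [show Finset.range 1 = {0} from rfl, Finset.filter_singleton]
      rw [if_pos (show 2 * ∑ i ∈ Finset.Icc 1 0, extSeq 0 y i = 0 by
        rw [Finset.Icc_eq_empty (by omega), Finset.sum_empty]
        rfl)]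

      rfl
  | succ n ih =>
      intro y
      have hy : y = Fin.snoc (Fin.init y) (y (Fin.last n)) := (Fin.snoc_init_self y).symm
      rw [hy]
      set y₀ := Fin.init y with hy₀
      set b := y (Fin.last n) with hb
      rw [leadCount, Finset.range_add_one, Finset.filter_insert]
      have hw := wsum_eq (b :: path y₀)
      have hlen : (b :: path y₀).length = n+1 := by
        simp [path_length]
      rw [hlen] at hw
      have hcond : (2 * ∑ i ∈ Finset.Icc 1 (n+1), extSeq (n+1) (Fin.snoc y₀ b) i = n+1)
          ↔ (step b + wsum (path y₀) = 0) := by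
        rw [sum_extSeq (n+1) (Fin.snoc y₀ b), path_snoc]
        rw [show step b + wsum (path y₀) = wsum (b :: path y₀) from rfl]
        rw [hw]
        constructor <;> intro h <;> omega
      have hsame : ∀ j ∈ Finset.range (n+1),
          ((2 * ∑ i ∈ Finset.Icc 1 j, extSeq (n+1) (Fin.snoc y₀ b) i = j)
            ↔ (2 * ∑ i ∈ Finset.Icc 1 j, extSeq n y₀ i = j)) := by
        intro j hj
        rw [Finset.mem_range] at hj
        have hagree : ∀ i ∈ Finset.Icc 1 j,
            extSeq (n+1) (Fin.snoc y₀ b) i = extSeq n y₀ i := by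
          intro i hi
          rw [Finset.mem_Icc] at hi
          exact extSeq_snoc_agree n y₀ b i hi.1 (by omega)
        rw [Finset.sum_congr rfl hagree]
      have hlead := ih y₀
      rw [leadCount] at hlead
      rw [path_snoc, zc_cons]
      by_cases hc : step b + wsum (path y₀) = 0
      · rw [if_pos (hcond.mpr hc)]
        rw [Finset.card_insert_of_notMem (by simp)]
        rw [Finset.filter_congr hsame, hlead, if_pos hc]
      · rw [if_neg (fun h => hc (hcond.mp h))]
        rw [Finset.filter_congr hsame, hlead, if_neg hc]

end FellerAux

open FellerAux in
/-- **Exact law of the number of equalizations (Feller).** For even `n ≥ 2` and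
`0 ≤ k ≤ n/2`, the number of bit sequences `y ∈ {0,1}^n` with lead-change count
`c(y₁,…,y_n) = k + 1` equals `2^k · binom (n-k) (n/2)`. -/
theorem feller_equalization_count
    (n : ℕ) (hn : 2 ≤ n) (hev : Even n) (k : ℕ) (hk : k ≤ n / 2) :
    (Finset.univ.filter (fun y : Fin n → Bool =>
        leadCount n (extSeq n y) = k + 1)).card
      = 2 ^ k * Nat.choose (n - k) (n / 2) := by
  classical
  obtain ⟨m, hm⟩ := hev
  have hm2 : n / 2 = m := by omega
  have hpred : Finset.univ.filter (fun y : Fin n → Bool => leadCount n (extSeq n y) = k + 1)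
      = Finset.univ.filter (fun y : Fin n → Bool => zc (path y) = k) := by
    apply Finset.filter_congr
    intro y _
    rw [lead_eq n y]
    constructor <;> intro h <;> omega
  rw [hpred]
  have H : ∀ y ∈ Finset.univ.filter (fun y : Fin n → Bool => zc (path y) = k),
      wsum (path y) ∈ Finset.Icc (-(n:ℤ)) (n:ℤ) := by
    intro y _
    have h1 := wsum_bound (path y)
    rw [path_length] at h1
    rw [Finset.mem_Icc]
    omega
  rw [Finset.card_eq_sum_card_fiberwise H]
  have hfib : ∀ s ∈ Finset.Icc (-(n:ℤ)) (n:ℤ),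
      ((Finset.univ.filter (fun y : Fin n → Bool => zc (path y) = k)).filter
        (fun y => wsum (path y) = s)).card = 2^k * g (n-k) (s.natAbs + k) := by
    intro s _
    rw [Finset.filter_filter, ← cnt_eq n k s, cnt]
  rw [Finset.sum_congr rfl hfib]
  have hdisj : Disjoint (Finset.Ico (-(n:ℤ)) 0) (Finset.Icc (0:ℤ) (n:ℤ)) := by
    rw [Finset.disjoint_left]
    intro a ha hb
    rw [Finset.mem_Ico] at ha
    rw [Finset.mem_Icc] at hb
    omega
  have hsplit : Finset.Icc (-(n:ℤ)) (n:ℤ) = Finset.Ico (-(n:ℤ)) 0 ∪ Finset.Icc 0 (n:ℤ) := by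
    ext x
    simp only [Finset.mem_Icc, Finset.mem_Ico, Finset.mem_union]
    omega
  rw [hsplit, Finset.sum_union hdisj]
  have hneg : ∑ s ∈ Finset.Ico (-(n:ℤ)) 0, 2^k * g (n-k) (s.natAbs + k)
      = ∑ a ∈ Finset.range n, 2^k * g (n-k) (k+1+a) := by
    refine Finset.sum_nbij' (i := fun s : ℤ => ((-s).toNat - 1)) (j := fun a : ℕ => -((a:ℤ)+1))
      ?_ ?_ ?_ ?_ ?_
    · intro a ha
      rw [Finset.mem_Ico] at ha
      rw [Finset.mem_range]
      omega
    · intro a ha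
      rw [Finset.mem_range] at ha
      rw [Finset.mem_Ico]
      omega
    · intro a ha
      rw [Finset.mem_Ico] at ha
      omega
    · intro a ha
      rw [Finset.mem_range] at ha
      omega
    · intro a ha
      rw [Finset.mem_Ico] at ha
      congr 2
      omega
  have hpos : ∑ s ∈ Finset.Icc (0:ℤ) (n:ℤ), 2^k * g (n-k) (s.natAbs + k)
      = ∑ a ∈ Finset.range (n+1), 2^k * g (n-k) (k+a) := by
    refine Finset.sum_nbij' (i := fun s : ℤ => s.toNat) (j := fun a : ℕ => (a:ℤ))
      ?_ ?_ ?_ ?_ ?_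
    · intro a ha
      rw [Finset.mem_Icc] at ha
      rw [Finset.mem_range]
      omega
    · intro a ha
      rw [Finset.mem_range] at ha
      rw [Finset.mem_Icc]
      omega
    · intro a ha
      rw [Finset.mem_Icc] at ha
      omega
    · intro a ha
      rw [Finset.mem_range] at ha
      omega
    · intro a ha
      rw [Finset.mem_Icc] at ha
      congr 2
      omega
  rw [hneg, hpos]
  rw [← Finset.mul_sum, ← Finset.mul_sum, ← Nat.mul_add]
  rw [sum_peel (n-k) k n]
  obtain ⟨M, hM⟩ : ∃ M, n - k = M + 1 := ⟨n-k-1, by omega⟩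
  rw [hM]
  have hSC := S_closed M k n (by omega)
  have harith : ∑ a ∈ Finset.range n, g (M+1) (k+1+a)
      = ∑ i ∈ Finset.range n, g (M+1) (k+1+i) := rfl
  have hgoal : ∑ a ∈ Finset.range n, g (M+1) (k+1+a) + (g (M+1) k
      + ∑ i ∈ Finset.range n, g (M+1) (k+1+i))
      = g (M+1) k + 2 * ∑ i ∈ Finset.range n, g (M+1) (k+1+i) := by
    omega
  rw [hgoal, hSC]
  have e1 : (M+k)/2 = m - 1 := by omega
  have e2 : (M+1+k)/2 = m := by omega
  rw [e1, e2, hm2]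
  obtain ⟨m', rfl⟩ : ∃ m', m = m' + 1 := ⟨m-1, by omega⟩
  rw [show m'+1-1 = m' from rfl, Nat.choose_succ_succ]
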